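/- If A is a topologically independent subset of a Hausdorff abelian topological group G, then the Kalton map κ_A : S_A → ⟨A⟩ is an open map onto the subgroup ⟨A⟩ generated by A. -/

import Mathlib

open Filter Topology

section Defs
variable {G : Type*} [AddCommGroup G] [TopologicalSpace G]

/-- A set `A` in a topological abelian group is *topologically independent* if `0 ∉ A` and
for every neighbourhood `W` of `0` there is a neighbourhood `U` of `0` such that whenever a
finite integer combination of elements of `A` lies in `U`, each of its terms lies in `W`. -/
def TopIndep (A : Set G) : Prop :=
  (0 : G) ∉ A ∧ ∀ W ∈ 𝓝 (0 : G), ∃ U ∈ 𝓝 (0 : G),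
    ∀ F : Finset G, ↑F ⊆ A → ∀ z : G → ℤ,
      (∑ a ∈ F, z a • a) ∈ U → ∀ a ∈ F, z a • a ∈ W

/-- Algebraic independence of a subset of an abelian group. -/
def Indep (A : Set G) : Prop :=
  (0 : G) ∉ A ∧ ∀ F : Finset G, ↑F ⊆ A → ∀ z : G → ℤ,
    (∑ a ∈ F, z a • a) = 0 → ∀ a ∈ F, z a • a = 0

/-- `A` is absolutely Cauchy summable: every neighbourhood of `0` contains the subgroup
generated by `A \ F` for some finite `F ⊆ A`. -/
def AbsCauchySummable (A : Set G) : Prop :=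
  ∀ U ∈ 𝓝 (0 : G), ∃ F : Finset G, ↑F ⊆ A ∧
    (AddSubgroup.closure (A \ ↑F) : Set G) ⊆ U

/-- `A` is absolutely summable: for every integer family the net of finite partial sums
converges. -/
def AbsSummable (A : Set G) : Prop :=
  ∀ z : A → ℤ, ∃ g : G, HasSum (fun a : A => z a • (a : G)) g

end Defs

/-- The direct sum `⊕_i H i`, realized as the subgroup of the product `Π i, H i`
consisting of finitely supported elements; it carries the topology inherited from the
Tychonoff product topology. -/
def FinSupp (ι : Type*) (H : ι → Type*) [∀ i, AddCommGroup (H i)] :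
    AddSubgroup (Π i, H i) where
  carrier := {f | {i | f i ≠ 0}.Finite}
  zero_mem' := by simp
  add_mem' := by
    intro f g hf hg
    refine (hf.union hg).subset fun i hi => ?_
    by_contra h
    simp only [Set.mem_union, Set.mem_setOf_eq, not_or, not_not] at h
    exact hi (by simp [h.1, h.2])
  neg_mem' := by
    intro f hf
    refine hf.subset fun i hi => ?_
    simp only [Set.mem_setOf_eq] at hi ⊢
    simpa using hi

/-- The Kalton map `κ_A : S_A = ⊕_{a ∈ A} ⟨a⟩ → G`, sending a finitely supported family to
the sum of its components. -/
noncomputable def kalton {G : Type*} [AddCommGroup G] (A : Set G)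
    (f : FinSupp A (fun a => AddSubgroup.zmultiples (a : G))) : G :=
  ∑ᶠ a : A, ((f.1 a : G))

section Sing
variable {ι : Type*} [DecidableEq ι] {H : ι → Type*} [∀ i, AddCommGroup (H i)]

/-- The element of the direct sum supported at `i` with value `x`. -/
def sing (i : ι) (x : H i) : FinSupp ι H :=
  ⟨Pi.single i x, (Set.finite_singleton i).subset (by
    intro b hb
    simp only [Set.mem_setOf_eq] at hb
    by_contra hba
    exact hb (Pi.single_eq_of_ne (by simpa using hba) x))⟩

end Sing

section Aux
variable {G : Type*} [AddCommGroup G]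

lemma mem_closure_decomp {A : Set G} {g : G} (hg : g ∈ AddSubgroup.closure A) :
    ∃ F : Finset G, ↑F ⊆ A ∧ ∃ z : G → ℤ, g = ∑ a ∈ F, z a • a := by
  rw [← Submodule.span_int_eq_addSubgroupClosure, Submodule.mem_toAddSubgroup,
    Submodule.mem_span_set] at hg
  obtain ⟨c, hc, hsum⟩ := hg
  exact ⟨c.support, hc, c, by rw [← hsum, Finsupp.sum]⟩

end Aux

section Kalton
variable {G : Type*} [AddCommGroup G] {A : Set G}

lemma finsupp_support_finite (x : ↥(FinSupp A (fun a => AddSubgroup.zmultiples (a : G)))) :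
    (Function.support fun a : A => ((x.1 a : G))).Finite := by
  refine x.2.subset fun a ha => ?_
  simp only [Function.mem_support, Set.mem_setOf_eq] at ha ⊢
  exact fun h => ha (by simp [h])

lemma kalton_add (x y : ↥(FinSupp A (fun a => AddSubgroup.zmultiples (a : G)))) :
    kalton A (x + y) = kalton A x + kalton A y := by
  unfold kalton
  rw [← finsum_add_distrib (finsupp_support_finite x) (finsupp_support_finite y)]
  apply finsum_congr
  intro a
  simp [AddSubgroup.coe_add]

lemma kalton_mem_closure (x : ↥(FinSupp A (fun a => AddSubgroup.zmultiples (a : G)))) :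
    kalton A x ∈ AddSubgroup.closure A := by
  unfold kalton
  rw [finsum_eq_sum _ (finsupp_support_finite x)]
  refine sum_mem fun a _ => ?_
  have h1 : AddSubgroup.zmultiples (a : G) ≤ AddSubgroup.closure A := by
    rw [AddSubgroup.zmultiples_le]
    exact AddSubgroup.subset_closure a.2
  exact h1 (x.1 a).2

end Kalton

section Comb
variable {G : Type*} [AddCommGroup G] (A : Set G)

open Classical in
noncomputable def comb (F : Finset G) (z : G → ℤ) : Π a : A, AddSubgroup.zmultiples (a : G) :=
  fun a => if (a : G) ∈ F then
    ⟨z a • (a : G), AddSubgroup.zsmul_mem _ (AddSubgroup.mem_zmultiples _) _⟩ else 0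

lemma comb_mem (F : Finset G) (z : G → ℤ) :
    comb A F z ∈ FinSupp A (fun a => AddSubgroup.zmultiples (a : G)) := by
  have : {a : A | comb A F z a ≠ 0} ⊆ ((↑) : A → G) ⁻¹' ↑F := by
    intro a ha
    simp only [Set.mem_setOf_eq, comb] at ha
    by_contra h
    have h' : (a : G) ∉ F := by simpa using h
    exact ha (if_neg h')
  exact ((F.finite_toSet).preimage (Subtype.val_injective.injOn)).subset this

lemma kalton_comb {F : Finset G} (hF : ↑F ⊆ A) (z : G → ℤ) :
    kalton A ⟨comb A F z, comb_mem A F z⟩ = ∑ a ∈ F, z a • a := by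
  classical
  unfold kalton
  rw [finsum_eq_sum_of_support_subset (s := F.subtype (· ∈ A))
    (f := fun a : A => ((comb A F z a : G)))]
  · have h1 : ∀ i ∈ F.subtype (· ∈ A), ((comb A F z i : G)) =
        (fun g : G => if g ∈ F then z g • g else 0) ↑i := by
      intro i hi
      simp [comb, Finset.mem_subtype.mp hi]
    have h2 := Finset.sum_map (F.subtype (· ∈ A)) (Function.Embedding.subtype _)
      (fun g : G => if g ∈ F then z g • g else 0)
    rw [Finset.subtype_map, Finset.filter_true_of_mem (fun a ha => hF ha)] at h2
    simp only [Function.Embedding.coe_subtype] at h2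
    rw [Finset.sum_congr rfl h1]; beta_reduce; convert h2.symm.trans ?_ using 2
    · split_ifs with h <;> simp [h]
    exact Finset.sum_congr rfl fun a ha => by simp [ha]
  · intro a ha
    simp only [Function.mem_support] at ha
    simp only [Finset.mem_coe, Finset.mem_subtype]
    by_contra h
    exact ha (by simp [comb, h])

end Comb

section Main
variable {G : Type*} [AddCommGroup G] [TopologicalSpace G] [IsTopologicalAddGroup G]

lemma key {A : Set G} (hA : TopIndep A)
    (O : Set ↥(FinSupp A (fun a => AddSubgroup.zmultiples (a : G)))) (hO : IsOpen O)
    (x : ↥(FinSupp A (fun a => AddSubgroup.zmultiples (a : G)))) (hx : x ∈ O) :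
    ∃ U : Set G, IsOpen U ∧ (0 : G) ∈ U ∧
      ∀ g ∈ U, g ∈ AddSubgroup.closure A → kalton A x + g ∈ kalton A '' O := by
  obtain ⟨O', hO', hOeq⟩ := isOpen_induced_iff.mp hO
  have hx' : x.1 ∈ O' := by rw [← hOeq] at hx; exact hx
  obtain ⟨I, u, hIu, hpi⟩ := isOpen_pi_iff.mp hO' x.1 hx'
  have hv : ∀ a : ↥A, ∃ v : Set G, IsOpen v ∧ (a ∈ I → u a = (Subtype.val) ⁻¹' v) := by
    intro a
    by_cases ha : a ∈ I
    · obtain ⟨t, ht, hteq⟩ := isOpen_induced_iff.mp (hIu a ha).1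
      exact ⟨t, ht, fun _ => hteq.symm⟩
    · exact ⟨∅, isOpen_empty, fun h => absurd h ha⟩
  choose v hvopen hveq using hv
  set W : Set G := ⋂ a ∈ (I : Set ↥A), (fun w => ((x.1 a : G)) + w) ⁻¹' (v a) with hW
  have hWopen : IsOpen W :=
    Set.Finite.isOpen_biInter I.finite_toSet
      (fun a _ => (hvopen a).preimage (continuous_add_left _))
  have hxv : ∀ a ∈ I, ((x.1 a : G)) ∈ v a := by
    intro a ha
    have := (hIu a ha).2
    rw [hveq a ha] at this
    exact this
  have hW0 : (0 : G) ∈ W := by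
    rw [hW]
    refine Set.mem_iInter₂.mpr fun a ha => ?_
    simpa using hxv a ha
  obtain ⟨U0, hU0, hprop⟩ := hA.2 W (hWopen.mem_nhds hW0)
  refine ⟨interior U0, isOpen_interior, mem_interior_iff_mem_nhds.mpr hU0, ?_⟩
  intro g hg hgcl
  obtain ⟨F, hF, z, hgz⟩ := mem_closure_decomp hgcl
  have hterm : ∀ a ∈ F, z a • a ∈ W :=
    hprop F hF z (by rw [← hgz]; exact interior_subset hg)
  set f : ↥(FinSupp A (fun a => AddSubgroup.zmultiples (a : G))) :=
    ⟨comb A F z, comb_mem A F z⟩ with hf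
  refine ⟨x + f, ?_, ?_⟩
  · rw [← hOeq]
    apply hpi
    intro a ha'
    have ha : a ∈ I := ha'
    have hau : ((x + f).1 a : G) ∈ v a := by
      have hcoe : ((x + f).1 a : G) = (x.1 a : G) + ((comb A F z a : G)) := by
        rfl
      rw [hcoe]
      by_cases haf : (a : G) ∈ F
      · have hcv : ((comb A F z a : G)) = z (a : G) • (a : G) := by simp [comb, haf]
        rw [hcv]
        have := Set.mem_iInter₂.mp (hterm _ haf) a ha
        exact this
      · have hcv : ((comb A F z a : G)) = 0 := by simp [comb, haf]
        rw [hcv, add_zero]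
        exact hxv a ha
    show (x + f).1 a ∈ u a
    rw [hveq a ha]
    exact hau
  · rw [kalton_add, hf, kalton_comb A hF z, ← hgz]
end Main

theorem stmt6 {G : Type*} [AddCommGroup G] [TopologicalSpace G] [IsTopologicalAddGroup G]
    [T2Space G] (A : Set G) (hA : TopIndep A) :
    ∀ O : Set ↥(FinSupp A (fun a => AddSubgroup.zmultiples (a : G))), IsOpen O →
      ∃ V : Set G, IsOpen V ∧
        kalton A '' O = V ∩ (AddSubgroup.closure A : Set G) := by
  intro O hO
  have H : ∀ x : ↥(FinSupp A (fun a => AddSubgroup.zmultiples (a : G))),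
      ∃ U : Set G, IsOpen U ∧ (0 : G) ∈ U ∧ (x ∈ O → ∀ g ∈ U,
        g ∈ AddSubgroup.closure A → kalton A x + g ∈ kalton A '' O) := by
    intro x
    by_cases hx : x ∈ O
    · obtain ⟨U, h1, h2, h3⟩ := key hA O hO x hx
      exact ⟨U, h1, h2, fun _ => h3⟩
    · exact ⟨Set.univ, isOpen_univ, trivial, fun h => absurd h hx⟩
  choose U hUopen hU0 hUprop using H
  refine ⟨⋃ x ∈ O, (fun h => h - kalton A x) ⁻¹' U x, ?_, ?_⟩
  · exact isOpen_biUnion fun x _ =>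
      (hUopen x).preimage (continuous_id.sub continuous_const)
  · ext h
    constructor
    · rintro ⟨x, hx, rfl⟩
      refine ⟨Set.mem_biUnion hx ?_, kalton_mem_closure x⟩
      simpa using hU0 x
    · rintro ⟨hhV, hhcl⟩
      obtain ⟨x, hx, hxm⟩ := Set.mem_iUnion₂.mp hhV
      have := hUprop x hx _ hxm (sub_mem hhcl (kalton_mem_closure x))
      simpa using this
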